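/- Suppose r ≥ 2 and A = (a^i_j) ∈ E_k(n,r). If i = i_1⋯i_r and j = j_1⋯j_r are in I(n,r) with vt(i) = vt(j), and the value i_r appears in some place of p = i_1⋯i_{r-1}, then j_r appears in the same place of q = j_1⋯j_{r-1}, and a^i_j = b^p_q, the common value of the slice sums of A indexed by p, q. -/
import Mathlib


open Finset

/-- The value-type of a multi-index `i ∈ I(n,r)`, encoded as the equivalence
relation on places whose classes are the blocks `{α : i α = v}`. -/
def vt {n r : ℕ} (i : Fin r → Fin n) : Fin r → Fin r → Prop :=
  fun a b => i a = i b

/-- Condition (G): for each place `α` and each pair of multi-indices obtained by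
deleting place `α`, all row and column `α`-slice sums equal a common scalar. -/
def CondG (k : Type*) [CommRing k] (n r : ℕ)
    (A : Matrix (Fin r → Fin n) (Fin r → Fin n) k) : Prop :=
  ∀ (α : Fin r) (i j : Fin r → Fin n), ∃ b : k,
    (∀ y : Fin n, (∑ x : Fin n, A (Function.update i α x) (Function.update j α y)) = b) ∧
    (∀ x : Fin n, (∑ y : Fin n, A (Function.update i α x) (Function.update j α y)) = b)

/-- Condition (H): entries vanish when row and column indices have different value-types. -/
def CondH (k : Type*) [CommRing k] (n r : ℕ)
    (A : Matrix (Fin r → Fin n) (Fin r → Fin n) k) : Prop :=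
  ∀ i j : Fin r → Fin n, vt i ≠ vt j → A i j = 0

/-- Condition (S): invariance under simultaneous place permutation of rows and columns. -/
def CondS (k : Type*) [CommRing k] (n r : ℕ)
    (A : Matrix (Fin r → Fin n) (Fin r → Fin n) k) : Prop :=
  ∀ (σ : Equiv.Perm (Fin r)) (i j : Fin r → Fin n), A (i ∘ σ) (j ∘ σ) = A i j

/-- Membership in the centralizer algebra `E_k(n,r) = End_{P_r(n)}(V^{⊗r})`. -/
def MemE (k : Type*) [CommRing k] (n r : ℕ)
    (A : Matrix (Fin r → Fin n) (Fin r → Fin n) k) : Prop :=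
  CondG k n r A ∧ CondH k n r A ∧ CondS k n r A

/-- The restriction `ρ(A) ∈ Mat_{I(n,r-1)}(k)`: its `(p,q)`-entry is the slice sum
`Σ_x a^{p x}_{q 0}`, which for `A ∈ E_k(n,r)` is the common value of all slice
sums of `A` indexed by `p, q`. -/
def rho (k : Type*) [CommRing k] (n r : ℕ) [NeZero n]
    (A : Matrix (Fin (r+1) → Fin n) (Fin (r+1) → Fin n) k) :
    Matrix (Fin r → Fin n) (Fin r → Fin n) k :=
  Matrix.of fun p q => ∑ x : Fin n, A (Fin.snoc p x) (Fin.snoc q 0)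

/-- The `k`-module `E_k(n,r)^i_j` of special invariants: those `A ∈ E_k(n,r)` such
that `A s t ≠ 0` implies `Λ_i(s) = Λ_j(t)`. -/
def MemESpec (k : Type*) [CommRing k] (n r : ℕ) (i j : Fin n)
    (A : Matrix (Fin r → Fin n) (Fin r → Fin n) k) : Prop :=
  MemE k n r A ∧ ∀ s t : Fin r → Fin n, A s t ≠ 0 → ∀ α : Fin r, s α = i ↔ t α = j

/-- The `r`-th Kronecker power `P(w)^{⊗r}` of the permutation matrix of `w`. -/
def kron (k : Type*) [CommRing k] (n r : ℕ) (w : Equiv.Perm (Fin n)) :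
    Matrix (Fin r → Fin n) (Fin r → Fin n) k :=
  Matrix.of fun i j => if i = ⇑w ∘ j then 1 else 0

/-- For `r ≥ 2` (represented as `r+2`) and `A ∈ E_k(n,r)`: if `vt i = vt j` and the
last value `i_r` appears at some place `β` of `p = i_1⋯i_{r-1}`, then `j_r` appears
at the same place `β` of `q = j_1⋯j_{r-1}`, and `a^i_j` equals the common value
`b^p_q` of the slice sums of `A` indexed by `p, q`. -/
theorem stmt_4 {k : Type*} [CommRing k] {n r : ℕ} (hn : 0 < n)
    (A : Matrix (Fin (r+2) → Fin n) (Fin (r+2) → Fin n) k)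
    (hA : MemE k n (r+2) A)
    (i j : Fin (r+2) → Fin n) (hvt : vt i = vt j)
    (β : Fin (r+1)) (hβ : i β.castSucc = i (Fin.last (r+1))) :
    j β.castSucc = j (Fin.last (r+1)) ∧
      ∀ b : k,
        (∀ y : Fin n,
          (∑ x : Fin n,
            A (Fin.snoc (i ∘ Fin.castSucc) x) (Fin.snoc (j ∘ Fin.castSucc) y)) = b) →
        A i j = b := by
  have hsnoc : ∀ (f : Fin (r+2) → Fin n) (x : Fin n),
      (Fin.snoc (f ∘ Fin.castSucc) x : Fin (r+2) → Fin n)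
        = Function.update f (Fin.last (r+1)) x := by
    intro f x
    funext a
    refine Fin.lastCases ?_ ?_ a
    · simp
    · intro b
      rw [Fin.snoc_castSucc, Function.update_of_ne (Fin.castSucc_lt_last b).ne]
      rfl
  have hj : j β.castSucc = j (Fin.last (r+1)) := by
    have := congrFun (congrFun hvt β.castSucc) (Fin.last (r+1))
    simp only [vt] at this
    exact this ▸ hβ
  refine ⟨hj, ?_⟩
  intro b hb
  obtain ⟨bG, hrow, hcol⟩ := hA.1 (Fin.last (r+1)) i j
  have hb' : bG = b := by
    have h1 := hrow (j (Fin.last (r+1)))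
    have h2 := hb (j (Fin.last (r+1)))
    simp only [hsnoc] at h2
    rw [← h1, ← h2]
  have h3 := hcol (i (Fin.last (r+1)))
  rw [Function.update_eq_self] at h3
  rw [← hb', ← h3]
  rw [Finset.sum_eq_single (j (Fin.last (r+1)))]
  · rw [Function.update_eq_self]
  · intro y _ hy
    apply hA.2.1
    intro hvt'
    apply hy
    have := congrFun (congrFun hvt' β.castSucc) (Fin.last (r+1))
    simp only [vt] at this
    have h4 : (Function.update j (Fin.last (r+1)) y) β.castSucc
        = Function.update j (Fin.last (r+1)) y (Fin.last (r+1)) := this ▸ hβ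
    rw [Function.update_of_ne (Fin.castSucc_lt_last β).ne, Function.update_self] at h4
    rw [← h4, hj]
  · intro h
    exact absurd (Finset.mem_univ _) h
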